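/- Let f̂ ∈ ℝ^n, ĝ ∈ ℝ^m be arbitrary, let P = P(f̂, ĝ), let f̂⁺ = −ε·LSE_row(S_X(ĝ)), and define the row-mass vector r ∈ ℝ^n by r_i = a_i·exp((f̂_i − f̂⁺_i)/ε). Then (i) P·1_m = r, and (ii) for every p ≥ 1 and every V ∈ ℝ^{m×p}, P·V = diag(r)·Softmax_row(S_X(ĝ))·V. -/

import Mathlib

/-- Transport-matrix application as an attention output (row form).
For arbitrary shifted potentials `(f̂, ĝ)`, with
`P i j = a i * b j * exp((f̂ i + ĝ j + (QKᵀ) i j)/ε)`,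
`f̂⁺ = -ε·LSE_row(S_X(ĝ))` and row-mass `r i = a i * exp((f̂ i - f̂⁺ i)/ε)`,
one has (i) `P·1_m = r` and (ii) `P·V = diag(r)·Softmax_row(S_X(ĝ))·V`
for every `V ∈ ℝ^{m×p}`. -/
theorem transport_apply_as_attention
    (n m d : ℕ) (hn : 0 < n) (hm : 0 < m) (hd : 0 < d)
    (X : Fin n → Fin d → ℝ) (Y : Fin m → Fin d → ℝ)
    (ε : ℝ) (hε : 0 < ε)
    (a : Fin n → ℝ) (b : Fin m → ℝ)
    (ha : ∀ i, 0 < a i) (hb : ∀ j, 0 < b j)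
    (fh : Fin n → ℝ) (gh : Fin m → ℝ)
    (QK : Fin n → Fin m → ℝ) (hQK : ∀ i j, QK i j = 2 * ∑ t, X i t * Y j t)
    (SX : Fin n → Fin m → ℝ)
    (hSX : ∀ i j, SX i j = (QK i j + gh j + ε * Real.log (b j)) / ε)
    (P : Fin n → Fin m → ℝ)
    (hP : ∀ i j, P i j = a i * b j * Real.exp ((fh i + gh j + QK i j) / ε))
    (fplus : Fin n → ℝ)
    (hfplus : ∀ i, fplus i = -ε * Real.log (∑ j, Real.exp (SX i j)))
    (r : Fin n → ℝ)
    (hr : ∀ i, r i = a i * Real.exp ((fh i - fplus i) / ε)) :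
    (∀ i, ∑ j, P i j = r i)
    ∧ (∀ p : ℕ, 1 ≤ p → ∀ V : Fin m → Fin p → ℝ, ∀ i c,
        ∑ j, P i j * V j c
          = r i * ∑ j, (Real.exp (SX i j) / ∑ k, Real.exp (SX i k)) * V j c) := by
  have hSpos : ∀ i, 0 < ∑ j, Real.exp (SX i j) := fun i =>
    Finset.sum_pos (fun j _ => Real.exp_pos _) (Finset.univ_nonempty_iff.2 ⟨⟨0, hm⟩⟩)
  have hPij : ∀ i j, P i j = a i * Real.exp (fh i / ε) * Real.exp (SX i j) := by
    intro i j
    rw [hP, hSX, ← Real.exp_log (hb j), mul_assoc, ← Real.exp_add,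
      mul_assoc, ← Real.exp_add]
    congr 2
    field_simp [(hSpos i).ne']
    simp only [Real.log_exp]
    ring
  have hri : ∀ i, r i = a i * Real.exp (fh i / ε) * ∑ j, Real.exp (SX i j) := by
    intro i
    rw [hr, hfplus]
    rw [show (fh i - -ε * Real.log (∑ j, Real.exp (SX i j))) / ε
        = fh i / ε + Real.log (∑ j, Real.exp (SX i j)) by field_simp; ring]
    rw [Real.exp_add, Real.exp_log (hSpos i)]
    ring
  constructor
  · intro i
    rw [hri i]
    rw [Finset.mul_sum]
    exact Finset.sum_congr rfl fun j _ => hPij i j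
  · intro p hp V i c
    rw [hri i, Finset.mul_sum]
    refine Finset.sum_congr rfl fun j _ => ?_
    rw [hPij i j]
    field_simp [(hSpos i).ne']
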